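/- For any n-bit key ω, the sequence P_s(1), P_s(2), ..., P_s(n+1) (the first n+1 values of the self-inverting permutation P_s in index order) is bitonic: it strictly increases up to some position and strictly decreases afterwards. -/

import Mathlib

/-- Binary representation of `ω`, most significant bit first. -/
def binRep (ω : ℕ) : List Bool := (Nat.bits ω).reverse

/-- The extended binary `B*`: `n` ones, then the one's complement of `B`, then a zero. -/
def extBin (ω : ℕ) : List Bool :=
  List.replicate (binRep ω).length true ++ (binRep ω).map (!·) ++ [false]

/-- Ascending list of 1-indexed positions of bit `b` in the bit string `l`. -/
def posOf (l : List Bool) (b : Bool) : List ℕ :=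
  ((List.range l.length).filter (fun i => l.getD i false == b)).map (· + 1)

/-- `Z₀`: ascending positions of zeros in `B*`. -/
def Z0 (ω : ℕ) : List ℕ := posOf (extBin ω) false

/-- `Z₁`: ascending positions of ones in `B*`. -/
def Z1 (ω : ℕ) : List ℕ := posOf (extBin ω) true

/-- Bitonic permutation `P_b = Z₀ ++ reverse Z₁`. -/
def Pb (ω : ℕ) : List ℕ := Z0 ω ++ (Z1 ω).reverse

/-- The self-inverting permutation `P_s`: it pairs the elements of `P_b`
equidistant from its extremes, i.e. `P_s (b_{2n+2-i}) = b_i`. -/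
def Ps (ω : ℕ) (x : ℕ) : ℕ :=
  (Pb ω).getD ((Pb ω).length - 1 - (Pb ω).idxOf x) 0

open List

lemma posOf_append (l₁ l₂ : List Bool) (b : Bool) :
    posOf (l₁ ++ l₂) b = posOf l₁ b ++ (posOf l₂ b).map (· + l₁.length) := by
  unfold posOf
  rw [length_append, range_add, filter_append, map_append]
  congr 1
  · apply congrArg
    apply filter_congr
    intro i hi
    rw [getD_append _ _ _ _ (mem_range.1 hi)]
  · rw [filter_map, map_map, map_map]
    have hp : List.filter ((fun i => (l₁ ++ l₂).getD i false == b) ∘ fun x => l₁.length + x)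
        (range l₂.length) = List.filter (fun i => l₂.getD i false == b) (range l₂.length) := by
      apply filter_congr
      intro i _
      show ((l₁ ++ l₂).getD (l₁.length + i) false == b) = _
      rw [getD_append_right _ _ _ _ (Nat.le_add_right _ _), Nat.add_sub_cancel_left]
    rw [hp]
    apply map_congr_left
    intro a _
    show l₁.length + a + 1 = a + 1 + l₁.length
    omega

lemma posOf_replicate_true (n : ℕ) :
    posOf (replicate n true) true = (range n).map (· + 1) := by
  unfold posOf
  rw [length_replicate]
  congr 1
  rw [filter_eq_self]
  intro i hi
  have hi' : i < (replicate n true).length := by simpa using mem_range.1 hi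
  rw [getD_eq_getElem _ _ hi']
  simp

lemma posOf_replicate_false (n : ℕ) :
    posOf (replicate n true) false = [] := by
  unfold posOf
  rw [length_replicate]
  have : List.filter (fun i => (replicate n true).getD i false == false) (range n) = [] := by
    rw [filter_eq_nil_iff]
    intro i hi
    have hi' : i < (replicate n true).length := by simpa using mem_range.1 hi
    rw [getD_eq_getElem _ _ hi']
    simp
  rw [this, map_nil]

lemma posOf_pairwise (l : List Bool) (b : Bool) : Pairwise (· < ·) (posOf l b) := by
  refine Pairwise.map _ (fun a b h => ?_) ((pairwise_lt_range).filter _)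
  show a + 1 < b + 1
  omega

lemma mem_posOf {l : List Bool} {b : Bool} {x : ℕ} :
    x ∈ posOf l b ↔ ∃ j, j < l.length ∧ l.getD j false = b ∧ x = j + 1 := by
  simp only [posOf, mem_map, mem_filter, mem_range, beq_iff_eq]
  constructor
  · rintro ⟨j, ⟨hj, hb⟩, rfl⟩; exact ⟨j, hj, hb, rfl⟩
  · rintro ⟨j, hj, hb, rfl⟩; exact ⟨j, ⟨hj, hb⟩, rfl⟩

lemma indexOf_rev_range (n x : ℕ) (h1 : 1 ≤ x) (h2 : x ≤ n) :
    (((range n).map (· + 1)).reverse).idxOf x = n - x := by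
  induction n with
  | zero => omega
  | succ m ih =>
    rw [range_succ, map_append, reverse_append]
    show List.idxOf x ((m+1) :: _) = _
    rw [idxOf_cons]
    rcases eq_or_lt_of_le h2 with h | h
    · simp [← h]
    · have hne : (m + 1 == x) = false := by simp; omega
      rw [hne]
      simp only [cond_false]
      show List.idxOf x (((range m).map (· + 1)).reverse) + 1 = m + 1 - x
      rw [ih (by omega)]
      omega

lemma rev_range_getD (n : ℕ) (h : 1 ≤ n) :
    (((range n).map (· + 1)).reverse).getD (n-1) 0 = 1 := by
  induction n with
  | zero => omega
  | succ m ih =>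
    rw [range_succ, map_append, reverse_append]
    show ((m+1) :: ((range m).map (· + 1)).reverse).getD (m+1-1) 0 = 1
    rw [Nat.add_sub_cancel]
    cases m with
    | zero => rfl
    | succ p =>
      rw [getD_cons_succ]
      have := ih (by omega)
      rw [Nat.add_sub_cancel] at this
      exact this

lemma bits_concat_true (ω : ℕ) (hω : 0 < ω) : ∃ l, Nat.bits ω = l ++ [true] := by
  induction ω using Nat.strong_induction_on with
  | _ ω ih =>
    rcases Nat.even_or_odd ω with ⟨m, hm⟩ | ⟨m, hm⟩
    · have hm0 : 0 < m := by omega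
      obtain ⟨l, hl⟩ := ih m (by omega) hm0
      refine ⟨false :: l, ?_⟩
      rw [show ω = 2 * m by omega, Nat.bit0_bits _ (by omega), hl]
      rfl
    · rcases Nat.eq_zero_or_pos m with rfl | hm0
      · refine ⟨[], ?_⟩
        rw [show ω = 2*0+1 by omega, Nat.bit1_bits]
        simp
      · obtain ⟨l, hl⟩ := ih m (by omega) hm0
        refine ⟨true :: l, ?_⟩
        rw [show ω = 2 * m + 1 by omega, Nat.bit1_bits, hl]
        rfl

lemma getD_map_add (l : List ℕ) (c i : ℕ) (h : i < l.length) :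
    (l.map (· + c)).getD i 0 = l.getD i 0 + c := by
  rw [getD_eq_getElem _ _ (by simpa using h), getElem_map, getD_eq_getElem _ _ h]

lemma getD_mem' (l : List ℕ) (i : ℕ) (h : i < l.length) : l.getD i 0 ∈ l := by
  rw [getD_eq_getElem _ _ h]
  exact getElem_mem h

lemma pairwise_getD {R : ℕ → ℕ → Prop} {l : List ℕ} (hp : Pairwise R l) {i j : ℕ}
    (hij : i < j) (hj : j < l.length) : R (l.getD i 0) (l.getD j 0) := by
  rw [getD_eq_getElem _ _ (by omega), getD_eq_getElem _ _ hj]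
  exact pairwise_iff_getElem.1 hp i j (by omega) hj hij

lemma getD_last_max {l : List ℕ} (hp : Pairwise (· < ·) l) {m : ℕ} (hm : m ∈ l)
    (hmax : ∀ x ∈ l, x ≤ m) : l.getD (l.length - 1) 0 = m := by
  obtain ⟨j, hj, hjv⟩ := getElem_of_mem hm
  rcases eq_or_lt_of_le (Nat.le_sub_one_of_lt hj) with h | h
  · subst h
    rw [getD_eq_getElem _ _ (by omega)]
    exact hjv
  · exfalso
    have hlt := pairwise_iff_getElem.1 hp j (l.length - 1) hj (by omega) h
    have hle := hmax _ (getElem_mem (show l.length - 1 < l.length by omega))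
    omega

/-- The subsequence `P_s 1, P_s 2, …, P_s (n+1)` is bitonic: it strictly increases up
to some position `k` and strictly decreases afterwards. -/
theorem stmt15 (ω n : ℕ) (hω : 0 < ω) (hn : (binRep ω).length = n) :
    ∃ k, k < n + 1 ∧
      (∀ i, i < k → Ps ω (i + 1) < Ps ω (i + 2)) ∧
      (∀ i, k ≤ i → i + 1 < n + 1 → Ps ω (i + 2) < Ps ω (i + 1)) := by
  obtain ⟨bl, hbl⟩ := bits_concat_true ω hω
  have hbs0 : binRep ω = true :: bl.reverse := by rw [binRep, hbl]; simp
  have hn1 : 1 ≤ n := by rw [← hn, hbs0]; simp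
  obtain ⟨C, hCdef⟩ : ∃ C : List Bool, C = (binRep ω).map (!·) ++ [false] := ⟨_, rfl⟩
  have hClen : C.length = n + 1 := by simp [hCdef, hn]
  have hext : extBin ω = replicate n true ++ C := by
    rw [extBin, hn, List.append_assoc, hCdef]
  have hC0 : C.getD 0 false = false := by rw [hCdef, hbs0]; rfl
  have hCn : C.getD n false = false := by
    rw [hCdef, getD_append_right _ _ _ _ (by simp [hn])]
    simp [hn]
  obtain ⟨A, hA⟩ : ∃ A : List ℕ, A = posOf C false := ⟨_, rfl⟩
  obtain ⟨T, hT⟩ : ∃ T : List ℕ, T = posOf C true := ⟨_, rfl⟩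
  obtain ⟨z, hz⟩ : ∃ z : ℕ, z = A.length := ⟨_, rfl⟩
  obtain ⟨t, ht⟩ : ∃ t : ℕ, t = T.length := ⟨_, rfl⟩
  have hzt : z + t = n + 1 := by
    have h := List.length_eq_length_filter_add
      (l := range C.length) (f := fun i => C.getD i false == false)
    have h2 : List.filter (fun x => !(C.getD x false == false)) (range C.length)
        = List.filter (fun i => C.getD i false == true) (range C.length) := by
      apply filter_congr
      intro i _
      cases C.getD i false <;> rfl
    rw [h2, length_range] at h
    have hzA : z = (List.filter (fun i => C.getD i false == false) (range C.length)).length := by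
      rw [hz, hA]; unfold posOf; rw [length_map]
    have htT : t = (List.filter (fun i => C.getD i false == true) (range C.length)).length := by
      rw [ht, hT]; unfold posOf; rw [length_map]
    rw [hClen] at h hzA htT
    omega
  have hmemA : ∀ x ∈ A, 1 ≤ x ∧ x ≤ n + 1 := by
    intro x hx
    rw [hA] at hx
    obtain ⟨j, hj, _, rfl⟩ := mem_posOf.1 hx
    rw [hClen] at hj
    omega
  have hmemT : ∀ x ∈ T, 1 ≤ x ∧ x ≤ n := by
    intro x hx
    rw [hT] at hx
    obtain ⟨j, hj, hb, rfl⟩ := mem_posOf.1 hx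
    rw [hClen] at hj
    have hjn : j ≠ n := by
      intro h
      rw [h, hCn] at hb
      exact absurd hb (by simp)
    omega
  have h1A : (1 : ℕ) ∈ A := by
    rw [hA]
    exact mem_posOf.2 ⟨0, by rw [hClen]; omega, hC0, rfl⟩
  have hnA : n + 1 ∈ A := by
    rw [hA]
    exact mem_posOf.2 ⟨n, by rw [hClen]; omega, hCn, rfl⟩
  have hpA : Pairwise (· < ·) A := hA ▸ posOf_pairwise C false
  have hpT : Pairwise (· < ·) T := hT ▸ posOf_pairwise C true
  have hz1 : 1 ≤ z := by
    rw [hz]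
    exact length_pos_iff.2 (ne_nil_of_mem h1A)
  obtain ⟨a0, A', hA'⟩ : ∃ a0 A', A = a0 :: A' := by
    cases hAc : A with
    | nil => rw [hAc] at h1A; exact absurd h1A not_mem_nil
    | cons x xs => exact ⟨x, xs, rfl⟩
  have ha0 : a0 = 1 := by
    have hp := pairwise_cons.1 (hA' ▸ hpA)
    rcases mem_cons.1 (hA' ▸ h1A) with h | h
    · omega
    · have h1 := hp.1 1 h
      have h2 := (hmemA a0 (hA' ▸ (mem_cons_self : a0 ∈ a0 :: A'))).1
      omega
  have hAlast : A.getD (z - 1) 0 = n + 1 := by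
    have := getD_last_max hpA hnA (fun x hx => (hmemA x hx).2)
    rw [← hz] at this
    exact this
  have hZ0 : Z0 ω = A.map (· + n) := by
    rw [Z0, hext, posOf_append, posOf_replicate_false, length_replicate, nil_append, hA]
  have hZ1 : Z1 ω = (range n).map (· + 1) ++ T.map (· + n) := by
    rw [Z1, hext, posOf_append, posOf_replicate_true, length_replicate, hT]
  obtain ⟨R, hR⟩ : ∃ R : List ℕ, R = ((range n).map (· + 1)).reverse := ⟨_, rfl⟩
  obtain ⟨RT, hRT⟩ : ∃ RT : List ℕ, RT = (T.map (· + n)).reverse := ⟨_, rfl⟩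
  have hRTlen : RT.length = t := by rw [hRT, ht]; simp
  have hRlen : R.length = n := by rw [hR]; simp
  have hPb : Pb ω = A.map (· + n) ++ (RT ++ R) := by
    rw [Pb, hZ0, hZ1, reverse_append, hRT, hR]
  have hAmlen : (A.map (· + n)).length = z := by rw [hz]; simp
  have hlen : (Pb ω).length = 2*n + 1 := by
    rw [hPb]
    simp only [length_append, hAmlen, hRTlen, hRlen]
    omega
  have hps : ∀ x, 1 ≤ x → x ≤ n → Ps ω x = (Pb ω).getD (x - 1) 0 := by
    intro x h1 h2
    have hx1 : x ∉ A.map (· + n) := by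
      simp only [mem_map]
      rintro ⟨a, ha, rfl⟩
      have := (hmemA a ha).1
      omega
    have hx2 : x ∉ RT := by
      rw [hRT]
      simp only [mem_reverse, mem_map]
      rintro ⟨a, ha, rfl⟩
      have := (hmemT a ha).1
      omega
    have hidx : (Pb ω).idxOf x = 2*n + 1 - x := by
      rw [hPb, idxOf_append_of_notMem hx1, idxOf_append_of_notMem hx2,
        hR, indexOf_rev_range n x h1 h2, hAmlen, hRTlen]
      omega
    rw [Ps, hidx, hlen]
    congr 1
    omega
  have hpstop : Ps ω (n + 1) = 1 := by
    have hidx : (Pb ω).idxOf (n+1) = 0 := by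
      rw [hPb, hA', ha0, map_cons, cons_append, idxOf_cons]
      have : ((1 + n : ℕ) == n + 1) = true := by simp [Nat.add_comm]
      rw [this]
      rfl
    rw [Ps, hidx, hlen]
    have h2n : 2*n+1-1-0 = 2*n := by omega
    rw [h2n, hPb, getD_append_right _ _ _ _ (by rw [hAmlen]; omega),
      getD_append_right _ _ _ _ (by rw [hAmlen, hRTlen]; omega)]
    rw [hAmlen, hRTlen]
    have e1 : 2*n - z - t = n - 1 := by omega
    rw [e1, hR, rev_range_getD n hn1]
  have hPbA : ∀ i, i < z → (Pb ω).getD i 0 = A.getD i 0 + n := by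
    intro i hi
    rw [hPb, getD_append _ _ _ _ (by rw [hAmlen]; omega), getD_map_add _ _ _ (by omega)]
  have hPbRT : ∀ j, j < t → (Pb ω).getD (z + j) 0 = RT.getD j 0 := by
    intro j hj
    rw [hPb, getD_append_right _ _ _ _ (by rw [hAmlen]; omega), hAmlen]
    have e1 : z + j - z = j := by omega
    rw [e1, getD_append _ _ _ _ (by rw [hRTlen]; omega)]
  have hpRT : Pairwise (· > ·) RT := by
    rw [hRT, pairwise_reverse]
    exact hpT.map _ (fun a b h => by simp only [gt_iff_lt]; omega)
  have hmemRT : ∀ x ∈ RT, n + 1 ≤ x ∧ x ≤ 2*n := by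
    intro x hx
    rw [hRT, mem_reverse, mem_map] at hx
    obtain ⟨a, ha, rfl⟩ := hx
    have := hmemT a ha
    omega
  have hbig : n + 1 ≤ (Pb ω).getD (n - 1) 0 := by
    rcases Nat.lt_or_ge (n-1) z with h | h
    · rw [hPbA _ h]
      have := (hmemA _ (getD_mem' A (n-1) (by omega))).1
      omega
    · have e : n - 1 = z + (n - 1 - z) := by omega
      rw [e, hPbRT _ (by omega)]
      exact (hmemRT _ (getD_mem' RT (n-1-z) (by omega))).1
  refine ⟨min (z - 1) (n - 1), by omega, ?_, ?_⟩
  · intro i hi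
    rw [hps (i+1) (by omega) (by omega), hps (i+2) (by omega) (by omega)]
    have e1 : i + 1 - 1 = i := by omega
    have e2 : i + 2 - 1 = i + 1 := by omega
    rw [e1, e2, hPbA _ (by omega), hPbA _ (by omega)]
    have := pairwise_getD hpA (show i < i + 1 by omega) (show i + 1 < A.length by omega)
    omega
  · intro i hk hi
    rcases eq_or_lt_of_le (show i + 2 ≤ n + 1 by omega) with h | h
    · rw [show i + 2 = n + 1 from h, hpstop, hps (i+1) (by omega) (by omega)]
      have e1 : i + 1 - 1 = n - 1 := by omega
      rw [e1]
      omega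
    · have hi2 : i + 2 ≤ n := by omega
      have hkz : z - 1 ≤ i := by omega
      rw [hps (i+1) (by omega) (by omega), hps (i+2) (by omega) (by omega)]
      have e1 : i + 1 - 1 = i := by omega
      have e2 : i + 2 - 1 = i + 1 := by omega
      rw [e1, e2]
      rcases eq_or_lt_of_le hkz with hzz | hzz
      · rw [← hzz, hPbA (z-1) (by omega), hAlast]
        have e3 : z - 1 + 1 = z + 0 := by omega
        rw [e3, hPbRT 0 (by omega)]
        have := (hmemRT _ (getD_mem' RT 0 (by omega))).2
        omega
      · have ez : i = z + (i - z) := by omega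
        have ez1 : i + 1 = z + (i + 1 - z) := by omega
        rw [show (i : ℕ) = z + (i - z) from ez, hPbRT _ (by omega)]
        rw [show z + (i - z) + 1 = z + (i + 1 - z) by omega, hPbRT _ (by omega)]
        exact pairwise_getD hpRT (show i - z < i + 1 - z by omega) (by omega)
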